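/- For every integer x, the complex integral ∫_{−π}^{π} (−2·cos²(K)/(cos(2K) + 3))·e^{iKx} dK equals (√2 − 2)·π if x = 0, and equals √2·π·(√2 − 1)^{|x|}·cos(πx/2) if x ≠ 0. -/

import Mathlib

open Real


noncomputable def G (K : ℝ) : ℝ :=
  (2*K - 2*Real.arctan ((3-2*Real.sqrt 2)*Real.sin (2*K)/(1+(3-2*Real.sqrt 2)*Real.cos (2*K))))/(4*Real.sqrt 2)

lemma s2 : Real.sqrt 2 ^ 2 = 2 := Real.sq_sqrt (by norm_num)
lemma s2pos : (0:ℝ) < Real.sqrt 2 := Real.sqrt_pos.mpr (by norm_num)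
lemma s2lt : Real.sqrt 2 < 1.5 := by nlinarith [s2, s2pos]
lemma s2gt : 1.4 < Real.sqrt 2 := by nlinarith [s2, s2pos]

lemma denom_pos (K : ℝ) : 0 < 1 + (3-2*Real.sqrt 2)*Real.cos (2*K) := by
  have h1 := Real.neg_one_le_cos (2*K)
  have h2 := Real.cos_le_one (2*K)
  nlinarith [s2lt, s2gt]

lemma denom2_pos (K : ℝ) : 0 < Real.cos (2*K) + 3 := by
  have h1 := Real.neg_one_le_cos (2*K)
  linarith

lemma alg (c s q : ℝ) (h : s^2 + c^2 = 1) (hq : q^2 = 2)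
    (hc1 : (0:ℝ) < 1+(3-2*q)*c) (hc2 : (0:ℝ) < c+3) (hq0 : (0:ℝ) < q) :
    (2 - 2*(1/(1+((3-2*q)*s/(1+(3-2*q)*c))^2) *
      (((3-2*q)*(2*c)*(1+(3-2*q)*c) - (3-2*q)*s*((3-2*q)*(-s*2)))/(1+(3-2*q)*c)^2)))/(4*q)
      = 1/(c+3) := by
  have hr1 : (1:ℝ)+(3-2*q)*c ≠ 0 := ne_of_gt hc1
  have hr2 : c+3 ≠ 0 := ne_of_gt hc2
  have hr4 : (3:ℝ)+c ≠ 0 := ne_of_gt (by linarith)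
  have hq' : q ≠ 0 := ne_of_gt hq0
  have e1 : 1+((3-2*q)*s/(1+(3-2*q)*c))^2 = 2*(3-2*q)*(3+c)/(1+(3-2*q)*c)^2 := by
    rw [div_pow, eq_div_iff (pow_ne_zero 2 hr1), add_mul, div_mul_cancel₀ _ (pow_ne_zero 2 hr1)]
    linear_combination ((3-2*q)^2) * h + 4 * hq
  have e2 : ((3-2*q)*(2*c)*(1+(3-2*q)*c) - (3-2*q)*s*((3-2*q)*(-s*2))) = 2*(3-2*q)*(c+(3-2*q)) := by
    linear_combination (2*(3-2*q)^2) * h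
  rw [e1, e2]
  have hr6 : (3:ℝ)-2*q ≠ 0 := by nlinarith
  rw [one_div (2*(3-2*q)*(3+c)/(1+(3-2*q)*c)^2), inv_div]
  field_simp
  ring

lemma hasDerivG (K : ℝ) : HasDerivAt G (1/(Real.cos (2*K)+3)) K := by
  set r := 3 - 2*Real.sqrt 2 with hr
  have hs : HasDerivAt (fun K => Real.sin (2*K)) (2*Real.cos (2*K)) K := by
    simpa [Function.comp_def, mul_comm] using
      (Real.hasDerivAt_sin (2*K)).comp K ((hasDerivAt_id K).const_mul 2)
  have hc : HasDerivAt (fun K => Real.cos (2*K)) (-Real.sin (2*K)*2) K := by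
    have := (Real.hasDerivAt_cos (2*K)).comp K ((hasDerivAt_id K).const_mul 2)
    simpa [Function.comp_def, mul_comm] using this
  have hnum : HasDerivAt (fun K => r*Real.sin (2*K)) (r*(2*Real.cos (2*K))) K := hs.const_mul r
  have hden : HasDerivAt (fun K => 1+r*Real.cos (2*K)) (r*(-Real.sin (2*K)*2)) K :=
    ((hc.const_mul r).const_add 1)
  have hd0 : 1 + r*Real.cos (2*K) ≠ 0 := ne_of_gt (denom_pos K)
  have hu := (hnum.div hden hd0).arctan
  have hG := (((hasDerivAt_id K).const_mul 2).sub (hu.const_mul 2)).div_const (4*Real.sqrt 2)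
  have hGfun : G = fun K => (2*K - 2*Real.arctan (r*Real.sin (2*K)/(1+r*Real.cos (2*K))))/(4*Real.sqrt 2) := rfl
  rw [hGfun]
  refine hG.congr_deriv ?_
  have := alg (Real.cos (2*K)) (Real.sin (2*K)) (Real.sqrt 2)
    (Real.sin_sq_add_cos_sq (2*K)) s2 (denom_pos K) (denom2_pos K) s2pos
  rw [← this]
  simp only [Pi.div_apply, hr]
  ring_nf

lemma key_integral : ∫ K in (-Real.pi)..Real.pi, 1/(Real.cos (2*K)+3) = Real.pi/Real.sqrt 2 := by
  have hcont : Continuous fun K : ℝ => 1/(Real.cos (2*K)+3) := by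
    apply Continuous.div continuous_const
    · exact (Real.continuous_cos.comp (continuous_const.mul continuous_id)).add continuous_const
    · exact fun K => ne_of_gt (denom2_pos K)
  rw [intervalIntegral.integral_eq_sub_of_hasDerivAt (fun K _ => hasDerivG K)
    (hcont.intervalIntegrable _ _)]
  have h1 : Real.sin (2*Real.pi) = 0 := Real.sin_two_pi
  have h2 : Real.sin (2*(-Real.pi)) = 0 := by
    rw [mul_neg]; rw [Real.sin_neg, Real.sin_two_pi]; ring
  unfold G
  rw [h1, h2]
  simp [Real.arctan_zero]
  have h3 : Real.sqrt 2 ≠ 0 := ne_of_gt s2pos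
  field_simp
  ring


lemma denom2_pos' (K : ℝ) : 0 < Real.cos (2*K) + 3 := by
  have h1 := Real.neg_one_le_cos (2*K); linarith

noncomputable def fC (K : ℝ) : ℂ := ((-2 * Real.cos K ^ 2 / (Real.cos (2 * K) + 3) : ℝ) : ℂ)

noncomputable def Ix (x : ℤ) : ℂ :=
  ∫ K in (-Real.pi)..Real.pi, fC K * Complex.exp (Complex.I * (K : ℂ) * (x : ℂ))

lemma contf : Continuous fC := by
  apply Complex.continuous_ofReal.comp
  apply Continuous.div
  · fun_prop
  · fun_prop
  · exact fun K => ne_of_gt (denom2_pos' K)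

lemma contexp (m : ℤ) : Continuous fun K : ℝ => Complex.exp (Complex.I * (K : ℂ) * (m : ℂ)) := by
  fun_prop

lemma intg (m : ℤ) {a b : ℝ} :
    IntervalIntegrable (fun K : ℝ => fC K * Complex.exp (Complex.I * (K : ℂ) * (m : ℂ)))
      MeasureTheory.volume a b :=
  (contf.mul (contexp m)).intervalIntegrable _ _

lemma expint (m : ℤ) :
    (∫ K in (-Real.pi)..Real.pi, Complex.exp (Complex.I * (K : ℂ) * (m : ℂ)))
      = if m = 0 then (2*Real.pi : ℂ) else 0 := by
  rcases eq_or_ne m 0 with h|h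
  · subst h
    simp
    ring
  · rw [if_neg h]
    have hc : (Complex.I * m) ≠ 0 :=
      mul_ne_zero Complex.I_ne_zero (by exact_mod_cast h)
    have hrw : ∀ K : ℝ, Complex.I * (K:ℂ) * (m:ℂ) = (Complex.I * m) * (K:ℂ) := fun K => by ring
    simp_rw [hrw]
    rw [integral_exp_mul_complex hc]
    rw [div_eq_zero_iff]
    left
    rw [sub_eq_zero, show Complex.I*(m:ℂ)*((Real.pi:ℝ):ℂ)
        = Complex.I*(m:ℂ)*((-Real.pi:ℝ):ℂ) + (m:ℂ)*(2*(Real.pi:ℂ)*Complex.I) by push_cast; ring,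
      Complex.exp_add, Complex.exp_int_mul_two_pi_mul_I, mul_one]

-- symmetry
lemma Ix_neg (x : ℤ) : Ix (-x) = Ix x := by
  unfold Ix
  have h2 := intervalIntegral.integral_comp_neg (a := -Real.pi) (b := Real.pi)
    (fun K : ℝ => fC K * Complex.exp (Complex.I * (K:ℂ) * (x:ℂ)))
  rw [neg_neg] at h2
  rw [← h2]
  apply intervalIntegral.integral_congr
  intro K _
  show fC K * Complex.exp (Complex.I * (K:ℂ) * ((-x : ℤ):ℂ))
      = fC (-K) * Complex.exp (Complex.I * ((-K:ℝ):ℂ) * (x:ℂ))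
  have hf : fC (-K) = fC K := by
    unfold fC
    rw [Real.cos_neg, show 2*(-K) = -(2*K) by ring, Real.cos_neg]
  rw [hf]
  congr 1
  push_cast
  ring

-- periodic shift
lemma Ix_odd {x : ℤ} (hx : Odd x) : Ix x = 0 := by
  have hsplit : Ix x = (∫ K in (-Real.pi)..(0:ℝ), fC K * Complex.exp (Complex.I * (K:ℂ) * (x:ℂ)))
      + ∫ K in (0:ℝ)..Real.pi, fC K * Complex.exp (Complex.I * (K:ℂ) * (x:ℂ)) := by
    unfold Ix
    rw [intervalIntegral.integral_add_adjacent_intervals (intg x) (intg x)]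
  have h2 := intervalIntegral.integral_comp_sub_right (a := (0:ℝ)) (b := Real.pi)
    (fun K : ℝ => fC K * Complex.exp (Complex.I * (K:ℂ) * (x:ℂ))) Real.pi
  rw [zero_sub, sub_self] at h2
  have hpt : ∀ K : ℝ, fC (K - Real.pi) * Complex.exp (Complex.I * ((K - Real.pi : ℝ):ℂ) * (x:ℂ))
      = - (fC K * Complex.exp (Complex.I * (K:ℂ) * (x:ℂ))) := by
    intro K
    have hf : fC (K - Real.pi) = fC K := by
      unfold fC
      rw [Real.cos_sub_pi, show 2*(K - Real.pi) = 2*K - 2*Real.pi by ring, Real.cos_sub_two_pi]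
      norm_num
    rw [hf]
    have he : Complex.exp (Complex.I * ((K - Real.pi : ℝ):ℂ) * (x:ℂ))
        = Complex.exp (Complex.I * (K:ℂ) * (x:ℂ)) * Complex.exp (-((Real.pi:ℂ) * Complex.I)) ^ x := by
      rw [← Complex.exp_int_mul, ← Complex.exp_add]
      congr 1
      push_cast
      ring
    rw [he, Complex.exp_neg, Complex.exp_pi_mul_I]
    rw [show ((-1 : ℂ))⁻¹ = -1 by norm_num, hx.neg_one_zpow]
    ring
  have h3 : (∫ K in (-Real.pi)..(0:ℝ), fC K * Complex.exp (Complex.I * (K:ℂ) * (x:ℂ)))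
      = - ∫ K in (0:ℝ)..Real.pi, fC K * Complex.exp (Complex.I * (K:ℂ) * (x:ℂ)) := by
    rw [← h2, ← intervalIntegral.integral_neg]
    apply intervalIntegral.integral_congr
    intro K _
    simpa using hpt K
  rw [hsplit, h3]
  ring

lemma ptalg (E P Q a d : ℂ) (hPQ : P + Q = 2*d) (hd : d = 2*a^2-1) (h3 : d+3 ≠ 0) :
    (-2*a^2)/(d+3) * (E*P) + 6*((-2*a^2)/(d+3) * E) + (-2*a^2)/(d+3)*(E*Q)
      = -(2*E + E*P + E*Q) := by
  have h : (-2*a^2)/(d+3) * (E*P) + 6*((-2*a^2)/(d+3) * E) + (-2*a^2)/(d+3)*(E*Q)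
      = (-2*a^2) * (E*P + 6*E + E*Q) / (d+3) := by ring
  rw [h, div_eq_iff h3]
  linear_combination (2*E)*hPQ + (E*(P+Q+6))*hd

lemma pt_identity (x : ℤ) (K : ℝ) :
    fC K * Complex.exp (Complex.I * (K:ℂ) * ((x+2 : ℤ):ℂ))
      + 6 * (fC K * Complex.exp (Complex.I * (K:ℂ) * (x:ℂ)))
      + fC K * Complex.exp (Complex.I * (K:ℂ) * ((x-2 : ℤ):ℂ))
    = -(2 * Complex.exp (Complex.I * (K:ℂ) * (x:ℂ))
        + Complex.exp (Complex.I * (K:ℂ) * ((x+2 : ℤ):ℂ))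
        + Complex.exp (Complex.I * (K:ℂ) * ((x-2 : ℤ):ℂ))) := by
  have hd0 : (Real.cos (2*K) + 3) ≠ 0 := ne_of_gt (denom2_pos' K)
  have hdC : ((Real.cos (2*K) : ℂ)) + 3 ≠ 0 := by
    intro h
    exact hd0 (by exact_mod_cast h)
  have hfc : fC K = (-2*((Real.cos K : ℝ):ℂ)^2) / (((Real.cos (2*K)) : ℂ) + 3) := by
    unfold fC
    rw [Complex.ofReal_div, Complex.ofReal_add, Complex.ofReal_mul, Complex.ofReal_pow,
      Complex.ofReal_neg, Complex.ofReal_ofNat, Complex.ofReal_ofNat]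
  have he1 : Complex.exp (Complex.I * (K:ℂ) * ((x+2 : ℤ):ℂ))
      = Complex.exp (Complex.I * (K:ℂ) * (x:ℂ)) * Complex.exp (((2*K:ℝ):ℂ) * Complex.I) := by
    rw [← Complex.exp_add]; congr 1; push_cast; ring
  have he2 : Complex.exp (Complex.I * (K:ℂ) * ((x-2 : ℤ):ℂ))
      = Complex.exp (Complex.I * (K:ℂ) * (x:ℂ)) * Complex.exp (-((2*K:ℝ):ℂ) * Complex.I) := by
    rw [← Complex.exp_add]; congr 1; push_cast; ring
  have hcos := Complex.two_cos (x := ((2*K:ℝ):ℂ))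
  rw [← Complex.ofReal_cos] at hcos
  have hc2 : ((Real.cos (2*K)):ℂ) = 2*((Real.cos K:ℝ):ℂ)^2 - 1 := by
    exact_mod_cast congrArg (Complex.ofReal) (Real.cos_two_mul K)
  rw [he1, he2, hfc]
  exact ptalg _ _ _ _ _ hcos.symm hc2 hdC

lemma Ix_rec (x : ℤ) : Ix (x+2) + 6 * Ix x + Ix (x-2)
    = -(2 * (if x = 0 then (2*Real.pi:ℂ) else 0) + (if x+2 = 0 then (2*Real.pi:ℂ) else 0)
        + (if x-2 = 0 then (2*Real.pi:ℂ) else 0)) := by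
  have intexp : ∀ m : ℤ, IntervalIntegrable
      (fun K : ℝ => Complex.exp (Complex.I * (K:ℂ) * (m:ℂ))) MeasureTheory.volume (-Real.pi) Real.pi :=
    fun m => (contexp m).intervalIntegrable _ _
  have comb : Ix (x+2) + 6 * Ix x + Ix (x-2)
      = ∫ K in (-Real.pi)..Real.pi,
          (fC K * Complex.exp (Complex.I * (K:ℂ) * ((x+2 : ℤ):ℂ))
            + 6 * (fC K * Complex.exp (Complex.I * (K:ℂ) * (x:ℂ)))
            + fC K * Complex.exp (Complex.I * (K:ℂ) * ((x-2 : ℤ):ℂ))) := by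
    unfold Ix
    rw [intervalIntegral.integral_add ((intg (x+2)).add ((intg x).const_mul 6)) (intg (x-2)),
      intervalIntegral.integral_add (intg (x+2)) ((intg x).const_mul 6),
      intervalIntegral.integral_const_mul]
  rw [comb, intervalIntegral.integral_congr (fun K _ => pt_identity x K)]
  rw [intervalIntegral.integral_neg,
    intervalIntegral.integral_add (((intexp x).const_mul 2).add (intexp (x+2))) (intexp (x-2)),
    intervalIntegral.integral_add ((intexp x).const_mul 2) (intexp (x+2)),
    intervalIntegral.integral_const_mul, expint x, expint (x+2), expint (x-2)]

lemma contInv : Continuous fun K : ℝ => 1/(Real.cos (2*K)+3) := by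
  apply Continuous.div continuous_const
  · fun_prop
  · exact fun K => ne_of_gt (denom2_pos' K)

lemma I0 : Ix 0 = (((Real.sqrt 2 - 2) * Real.pi : ℝ) : ℂ) := by
  unfold Ix
  have h1 : Set.EqOn (fun K : ℝ => fC K * Complex.exp (Complex.I * (K:ℂ) * ((0:ℤ):ℂ)))
      (fun K : ℝ => fC K) (Set.uIcc (-Real.pi) Real.pi) := by
    intro K _; simp
  rw [intervalIntegral.integral_congr h1]
  unfold fC
  rw [intervalIntegral.integral_ofReal]
  have pt : Set.EqOn (fun K : ℝ => -2*Real.cos K^2/(Real.cos (2*K)+3))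
      (fun K : ℝ => -1 + 2*(1/(Real.cos (2*K)+3))) (Set.uIcc (-Real.pi) Real.pi) := by
    intro K _
    have hd : Real.cos (2*K) + 3 ≠ 0 := ne_of_gt (denom2_pos' K)
    have h2 := Real.cos_two_mul K
    show -2*Real.cos K^2/(Real.cos (2*K)+3) = -1 + 2*(1/(Real.cos (2*K)+3))
    field_simp
    linear_combination h2
  rw [intervalIntegral.integral_congr pt]
  rw [intervalIntegral.integral_add (intervalIntegrable_const)
    ((contInv.intervalIntegrable _ _).const_mul 2),
    intervalIntegral.integral_const_mul, key_integral, intervalIntegral.integral_const]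
  rw [Complex.ofReal_inj]
  have h3 : Real.sqrt 2 ≠ 0 := ne_of_gt s2pos
  have h5 : 2*(Real.pi/Real.sqrt 2) = Real.sqrt 2 * Real.pi := by
    field_simp
    linear_combination (-1:ℝ) * s2
  rw [smul_eq_mul, h5]
  ring

noncomputable def V (m : ℕ) : ℂ :=
  if m = 0 then (((Real.sqrt 2 - 2) * Real.pi : ℝ) : ℂ)
  else ((Real.sqrt 2 * Real.pi * (Real.sqrt 2 - 1)^(2*m) * (-1:ℝ)^m : ℝ) : ℂ)

lemma s2C : ((Real.sqrt 2 : ℝ):ℂ)^2 = 2 := by exact_mod_cast congrArg Complex.ofReal s2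

lemma Vrec (n : ℕ) : V (n+2) = -(if n = 0 then (2*(Real.pi:ℂ)) else 0) - 6 * V (n+1) - V n := by
  cases n with
  | zero =>
    simp only [V, if_pos rfl, if_neg (by norm_num : (1:ℕ) ≠ 0), if_neg (by norm_num : ¬(2:ℕ) = 0),
      if_neg (by norm_num : ¬(0+2:ℕ) = 0), if_neg (by norm_num : ¬(0+1:ℕ) = 0)]
    push_cast
    linear_combination ((Real.pi:ℂ) * ((Real.sqrt 2:ℝ):ℂ) * (((Real.sqrt 2:ℝ):ℂ)^2 - 4*((Real.sqrt 2:ℝ):ℂ) + 2)) * s2C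
  | succ k =>
    simp only [V, if_neg (by omega : ¬(k+1 = 0)), if_neg (by omega : ¬(k+1+2 = 0)),
      if_neg (by omega : ¬(k+1+1 = 0))]
    push_cast
    rw [show 2*(k+1+2) = (2*k+2)+4 by ring, pow_add, show 2*(k+1+1) = (2*k+2)+2 by ring, pow_add,
      show 2*(k+1) = 2*k+2 by ring, show k+1+2 = (k+1)+2 by ring, pow_add,
      show k+1+1 = (k+1)+1 by ring, pow_add]
    linear_combination ((Real.pi:ℂ) * ((Real.sqrt 2:ℝ):ℂ) * (((Real.sqrt 2:ℝ):ℂ)-1)^(2*k+2) * (-1:ℂ)^(k+1)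
      * (((Real.sqrt 2:ℝ):ℂ)^2 - 4*((Real.sqrt 2:ℝ):ℂ) + 2)) * s2C

lemma IV : ∀ m : ℕ, Ix (2*(m:ℤ)) = V m ∧ Ix (2*((m:ℤ)+1)) = V (m+1) := by
  intro m
  induction m with
  | zero =>
    constructor
    · simpa [V] using I0
    · have hr := Ix_rec 0
      rw [if_pos rfl, if_neg (by norm_num : ¬((0:ℤ)+2 = 0)), if_neg (by norm_num : ¬((0:ℤ)-2 = 0)),
        show ((0:ℤ)+2) = 2 by ring, show ((0:ℤ)-2) = -2 by ring, Ix_neg 2, I0] at hr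
      rw [show (2*(((0:ℕ):ℤ)+1) : ℤ) = 2 by norm_num]
      have hv : V (0+1) = ((Real.sqrt 2 * Real.pi * (Real.sqrt 2 - 1)^(2*1) * (-1:ℝ)^1 : ℝ) : ℂ) := by
        simp [V]
      rw [hv]
      rw [show (((Real.sqrt 2 - 2) * Real.pi : ℝ):ℂ) = (((Real.sqrt 2:ℝ):ℂ)-2)*(Real.pi:ℂ) by push_cast; ring] at hr
      push_cast
      linear_combination (1/2) * hr + ((((Real.sqrt 2:ℝ):ℂ)-2) * (Real.pi:ℂ)) * s2C
  | succ n ih =>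
    refine ⟨ih.2, ?_⟩
    have hr := Ix_rec (2*(n:ℤ)+2)
    rw [if_neg (by omega : ¬(2*(n:ℤ)+2 = 0)), if_neg (by omega : ¬(2*(n:ℤ)+2+2 = 0)),
      show (2*(n:ℤ)+2-2) = 2*(n:ℤ) by ring,
      show (2*(n:ℤ)+2+2) = 2*(n:ℤ)+4 by ring,
      show (2*(n:ℤ)+2) = 2*((n:ℤ)+1) by ring] at hr
    rw [ih.1, ih.2] at hr
    have hif : (if (2*(n:ℤ)) = 0 then (2*(Real.pi:ℂ)) else 0)
        = (if n = 0 then (2*(Real.pi:ℂ)) else 0) := by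
      by_cases h : n = 0
      · simp [h]
      · rw [if_neg h, if_neg (by omega : ¬(2*(n:ℤ)) = 0)]
    rw [hif] at hr
    rw [show (2*(((n+1:ℕ):ℤ)+1)) = 2*(n:ℤ)+4 by push_cast; ring,
      show (n+1+1) = n+2 from rfl, Vrec n]
    linear_combination hr

lemma negone_zpow_natAbs (k : ℤ) : ((-1:ℝ)^k : ℝ) = (-1:ℝ)^(k.natAbs) := by
  rcases Int.natAbs_eq k with h | h
  · conv_lhs => rw [h]
    rw [zpow_natCast]
  · conv_lhs => rw [h]
    rw [zpow_neg, zpow_natCast]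
    rcases Nat.even_or_odd k.natAbs with he | ho
    · rw [he.neg_one_pow]; norm_num
    · rw [ho.neg_one_pow]; norm_num


/-- For every integer `x`,
`∫_{−π}^{π} (−2 cos²K/(cos 2K + 3)) e^{iKx} dK` equals `(√2 − 2)π` if `x = 0` and
`√2 π (√2 − 1)^{|x|} cos(πx/2)` if `x ≠ 0`. -/
theorem stmt11 (x : ℤ) :
    (∫ K in (-Real.pi)..Real.pi,
        ((-2 * Real.cos K ^ 2 / (Real.cos (2 * K) + 3) : ℝ) : ℂ) *
          Complex.exp (Complex.I * (K : ℂ) * (x : ℂ))) =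
      if x = 0 then (((Real.sqrt 2 - 2) * Real.pi : ℝ) : ℂ)
      else ((Real.sqrt 2 * Real.pi * (Real.sqrt 2 - 1) ^ x.natAbs *
              Real.cos (Real.pi * (x : ℝ) / 2) : ℝ) : ℂ) := by
  show Ix x = _
  by_cases h0 : x = 0
  · subst h0
    rw [if_pos rfl]
    exact I0
  · rw [if_neg h0]
    rcases Int.even_or_odd x with he | ho
    · obtain ⟨k, hk⟩ := he
      have hx2 : x = 2*k := by omega
      set m := k.natAbs with hm
      have hm0 : m ≠ 0 := by
        simp only [hm, ne_eq, Int.natAbs_eq_zero]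
        omega
      have hIx : Ix x = V m := by
        rcases Int.natAbs_eq k with h | h
        · rw [hx2, h]
          exact (IV m).1
        · rw [hx2, h, show (2*(-((m:ℕ):ℤ))) = -(2*((m:ℕ):ℤ)) by ring, Ix_neg]
          exact (IV m).1
      rw [hIx]
      have hnat : x.natAbs = 2*m := by
        rw [hx2, Int.natAbs_mul, hm]
        rfl
      have hcos : Real.cos (Real.pi * (x:ℝ) / 2) = (-1:ℝ)^m := by
        have h1 : Real.pi * (x:ℝ)/2 = ((k:ℤ):ℝ)*Real.pi := by rw [hx2]; push_cast; ring
        rw [h1]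
        have h2 := Real.cos_int_mul_pi_sub 0 k
        rw [sub_zero, Real.cos_zero, mul_one] at h2
        rw [h2, negone_zpow_natAbs]
      rw [hnat, hcos]
      rw [V, if_neg hm0]
    · rw [Ix_odd ho]
      obtain ⟨k, hk⟩ := ho
      have hcos : Real.cos (Real.pi * (x:ℝ)/2) = 0 := by
        have h1 : Real.pi * (x:ℝ)/2 = ((k:ℤ):ℝ)*Real.pi + Real.pi/2 := by rw [hk]; push_cast; ring
        rw [h1, Real.cos_add_pi_div_two, Real.sin_int_mul_pi, neg_zero]
      rw [hcos]
      norm_num
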